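/- For w, v ∈ ℝ^T define g(α) = F(w + αv) where F(u) = log(1 + Σ_{t=1}^T exp(u_t)). Then |g'''(α)| ≤ 2 ‖v‖_1 · g''(α) ≤ 2 √T ‖v‖_2 · g''(α) for all α ∈ ℝ. -/

import Mathlib

open scoped BigOperators
open Finset

namespace SCB

variable {T : ℕ} (w v : Fin T → ℝ)

noncomputable def Ek (w v : Fin T → ℝ) (k : ℕ) (a : ℝ) : ℝ :=
  ∑ t, (v t) ^ k * Real.exp (w t + a * v t)

noncomputable def Sf (w v : Fin T → ℝ) (a : ℝ) : ℝ := 1 + Ek w v 0 a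

lemma Sf_pos (a : ℝ) : 0 < Sf w v a := by
  have : 0 ≤ Ek w v 0 a :=
    Finset.sum_nonneg fun t _ => mul_nonneg (by positivity) (Real.exp_nonneg _)
  unfold Sf; linarith

lemma hasDerivAt_Ek (k : ℕ) (a : ℝ) :
    HasDerivAt (Ek w v k) (Ek w v (k+1) a) a := by
  unfold Ek
  apply HasDerivAt.fun_sum
  intro t _
  have h1 : HasDerivAt (fun x : ℝ => w t + x * v t) (v t) a := by
    simpa using ((hasDerivAt_id a).mul_const (v t)).const_add (w t)
  have h2 := (h1.exp).const_mul ((v t) ^ k)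
  exact h2.congr_deriv (by ring)

lemma hasDerivAt_Sf (a : ℝ) : HasDerivAt (Sf w v) (Ek w v 1 a) a :=
  (hasDerivAt_Ek w v 0 a).const_add 1

lemma deriv1 (a : ℝ) :
    HasDerivAt (fun x : ℝ => Real.log (1 + ∑ t, Real.exp (w t + x * v t)))
      (Ek w v 1 a / Sf w v a) a := by
  have h := (hasDerivAt_Sf w v a).log (ne_of_gt (Sf_pos w v a))
  have he : (fun x : ℝ => Real.log (1 + ∑ t, Real.exp (w t + x * v t)))
      = fun y => Real.log (Sf w v y) := by
    funext y; simp [Sf, Ek]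
  rw [he]
  exact h

lemma deriv2 (a : ℝ) :
    HasDerivAt (fun x : ℝ => Ek w v 1 x / Sf w v x)
      ((Ek w v 2 a * Sf w v a - Ek w v 1 a * Ek w v 1 a) / Sf w v a ^ 2) a :=
  (hasDerivAt_Ek w v 1 a).div (hasDerivAt_Sf w v a) (ne_of_gt (Sf_pos w v a))

lemma deriv3 (a : ℝ) :
    HasDerivAt (fun x : ℝ => (Ek w v 2 x * Sf w v x - Ek w v 1 x * Ek w v 1 x) / Sf w v x ^ 2)
      (((Ek w v 3 a * Sf w v a + Ek w v 2 a * Ek w v 1 a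
          - (Ek w v 2 a * Ek w v 1 a + Ek w v 1 a * Ek w v 2 a)) * Sf w v a ^ 2
        - (Ek w v 2 a * Sf w v a - Ek w v 1 a * Ek w v 1 a) * (2 * Sf w v a ^ 1 * Ek w v 1 a))
        / (Sf w v a ^ 2) ^ 2) a := by
  have hN : HasDerivAt (fun x : ℝ => Ek w v 2 x * Sf w v x - Ek w v 1 x * Ek w v 1 x)
      (Ek w v 3 a * Sf w v a + Ek w v 2 a * Ek w v 1 a
        - (Ek w v 2 a * Ek w v 1 a + Ek w v 1 a * Ek w v 2 a)) a :=
    ((hasDerivAt_Ek w v 2 a).mul (hasDerivAt_Sf w v a)).sub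
      ((hasDerivAt_Ek w v 1 a).mul (hasDerivAt_Ek w v 1 a))
  have hD : HasDerivAt (fun x : ℝ => Sf w v x ^ 2) (2 * Sf w v a ^ 1 * Ek w v 1 a) a := by
    simpa using (hasDerivAt_Sf w v a).fun_pow 2
  exact hN.div hD (pow_ne_zero 2 (ne_of_gt (Sf_pos w v a)))

lemma iter2_eq (α : ℝ) :
    iteratedDeriv 2 (fun a : ℝ => Real.log (1 + ∑ t, Real.exp (w t + a * v t))) α
      = (Ek w v 2 α * Sf w v α - Ek w v 1 α * Ek w v 1 α) / Sf w v α ^ 2 := by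
  rw [iteratedDeriv_succ, iteratedDeriv_one]
  have h1 : deriv (fun a : ℝ => Real.log (1 + ∑ t, Real.exp (w t + a * v t)))
      = fun x => Ek w v 1 x / Sf w v x := funext fun x => (deriv1 w v x).deriv
  rw [h1]
  exact (deriv2 w v α).deriv

lemma iter3_eq (α : ℝ) :
    iteratedDeriv 3 (fun a : ℝ => Real.log (1 + ∑ t, Real.exp (w t + a * v t))) α
      = ((Ek w v 3 α * Sf w v α + Ek w v 2 α * Ek w v 1 α
          - (Ek w v 2 α * Ek w v 1 α + Ek w v 1 α * Ek w v 2 α)) * Sf w v α ^ 2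
        - (Ek w v 2 α * Sf w v α - Ek w v 1 α * Ek w v 1 α) * (2 * Sf w v α ^ 1 * Ek w v 1 α))
        / (Sf w v α ^ 2) ^ 2 := by
  rw [iteratedDeriv_succ]
  have h2 : iteratedDeriv 2 (fun a : ℝ => Real.log (1 + ∑ t, Real.exp (w t + a * v t)))
      = fun x => (Ek w v 2 x * Sf w v x - Ek w v 1 x * Ek w v 1 x) / Sf w v x ^ 2 :=
    funext fun x => iter2_eq w v x
  rw [h2]
  exact (deriv3 w v α).deriv

lemma expand2 (a b α : ℝ) :
    ∑ t, Real.exp (w t + α * v t) * (a * v t - b) ^ 2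
      = a ^ 2 * Ek w v 2 α - 2 * a * b * Ek w v 1 α + b ^ 2 * Ek w v 0 α := by
  simp only [Ek, Finset.mul_sum, ← Finset.sum_sub_distrib, ← Finset.sum_add_distrib]
  exact Finset.sum_congr rfl fun t _ => by ring

lemma expand3 (a b α : ℝ) :
    ∑ t, Real.exp (w t + α * v t) * (a * v t - b) ^ 3
      = a ^ 3 * Ek w v 3 α - 3 * a ^ 2 * b * Ek w v 2 α
        + 3 * a * b ^ 2 * Ek w v 1 α - b ^ 3 * Ek w v 0 α := by
  simp only [Ek, Finset.mul_sum, ← Finset.sum_sub_distrib, ← Finset.sum_add_distrib]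
  exact Finset.sum_congr rfl fun t _ => by ring

end SCB

open SCB

/-- Self-concordance-type bound for the multinomial logistic log-partition function.
For `g(α) = F(w + αv)` with `F(u) = log(1 + Σ_t exp(u_t))`:
`|g'''(α)| ≤ 2‖v‖₁ g''(α) ≤ 2√T ‖v‖₂ g''(α)`. -/
theorem self_concordant_bound (T : ℕ) (w v : Fin T → ℝ) (α : ℝ) :
    |iteratedDeriv 3 (fun a : ℝ => Real.log (1 + ∑ t, Real.exp (w t + a * v t))) α|
        ≤ 2 * (∑ t, |v t|)
            * iteratedDeriv 2 (fun a : ℝ => Real.log (1 + ∑ t, Real.exp (w t + a * v t))) α ∧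
      2 * (∑ t, |v t|)
          * iteratedDeriv 2 (fun a : ℝ => Real.log (1 + ∑ t, Real.exp (w t + a * v t))) α
        ≤ 2 * Real.sqrt T * Real.sqrt (∑ t, (v t) ^ 2)
            * iteratedDeriv 2 (fun a : ℝ => Real.log (1 + ∑ t, Real.exp (w t + a * v t))) α := by
  rw [iter3_eq w v α, iter2_eq w v α]
  set s := Sf w v α with hs_def
  set e1 := Ek w v 1 α with he1_def
  set e2 := Ek w v 2 α with he2_def
  set e3 := Ek w v 3 α with he3_def
  set L := ∑ t, |v t| with hL_def
  set C2 := ∑ t, Real.exp (w t + α * v t) * (s * v t - e1) ^ 2 with hC2_def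
  set C3 := ∑ t, Real.exp (w t + α * v t) * (s * v t - e1) ^ 3 with hC3_def
  have hs : 0 < s := Sf_pos w v α
  have h0 : Ek w v 0 α = s - 1 := by rw [hs_def]; simp [Sf]
  have hLpos : 0 ≤ L := Finset.sum_nonneg fun t _ => abs_nonneg _
  have hC2pos : 0 ≤ C2 :=
    Finset.sum_nonneg fun t _ => mul_nonneg (Real.exp_nonneg _) (sq_nonneg _)
  have hvL : ∀ t, |v t| ≤ L := fun t =>
    Finset.single_le_sum (fun i _ => abs_nonneg (v i)) (Finset.mem_univ t)
  have hexp : ∀ t, Real.exp (w t + α * v t) ≤ s := by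
    intro t
    have h1 : (v t) ^ 0 * Real.exp (w t + α * v t) ≤ Ek w v 0 α :=
      Finset.single_le_sum (f := fun i => (v i) ^ 0 * Real.exp (w i + α * v i))
        (fun i _ => mul_nonneg (by positivity) (Real.exp_nonneg _))
        (Finset.mem_univ t)
    simp only [pow_zero, one_mul] at h1
    rw [h0] at h1; linarith
  have he1b : |e1| ≤ L * s := by
    calc |e1| ≤ ∑ t, |(v t) ^ 1 * Real.exp (w t + α * v t)| := by
          rw [he1_def]; exact Finset.abs_sum_le_sum_abs _ _
      _ = ∑ t, |v t| * Real.exp (w t + α * v t) := by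
          refine Finset.sum_congr rfl fun t _ => ?_
          rw [pow_one, abs_mul, abs_of_pos (Real.exp_pos _)]
      _ ≤ ∑ t, |v t| * s :=
          Finset.sum_le_sum fun t _ => mul_le_mul_of_nonneg_left (hexp t) (abs_nonneg _)
      _ = L * s := by rw [hL_def, ← Finset.sum_mul]
  have hc : ∀ t, |s * v t - e1| ≤ 2 * (L * s) := by
    intro t
    calc |s * v t - e1| ≤ |s * v t| + |e1| := abs_sub _ _
      _ ≤ L * s + L * s := by
          refine add_le_add ?_ he1b
          rw [abs_mul, abs_of_pos hs]
          calc s * |v t| ≤ s * L := mul_le_mul_of_nonneg_left (hvL t) hs.le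
            _ = L * s := mul_comm _ _
      _ = 2 * (L * s) := by ring
  have hC3b : |C3| ≤ 2 * (L * s) * C2 := by
    calc |C3| ≤ ∑ t, |Real.exp (w t + α * v t) * (s * v t - e1) ^ 3| := by
          rw [hC3_def]; exact Finset.abs_sum_le_sum_abs _ _
      _ ≤ ∑ t, 2 * (L * s) * (Real.exp (w t + α * v t) * (s * v t - e1) ^ 2) := by
          refine Finset.sum_le_sum fun t _ => ?_
          rw [abs_mul, abs_of_pos (Real.exp_pos _), abs_pow]
          have h1 : |s * v t - e1| ^ 3 = |s * v t - e1| * (s * v t - e1) ^ 2 := by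
            rw [pow_succ', sq_abs]
          rw [h1]
          have h2 : |s * v t - e1| * (s * v t - e1) ^ 2 ≤ 2 * (L * s) * (s * v t - e1) ^ 2 :=
            mul_le_mul_of_nonneg_right (hc t) (sq_nonneg _)
          calc Real.exp (w t + α * v t) * (|s * v t - e1| * (s * v t - e1) ^ 2)
              ≤ Real.exp (w t + α * v t) * (2 * (L * s) * (s * v t - e1) ^ 2) :=
                mul_le_mul_of_nonneg_left h2 (Real.exp_nonneg _)
            _ = 2 * (L * s) * (Real.exp (w t + α * v t) * (s * v t - e1) ^ 2) := by ring
      _ = 2 * (L * s) * C2 := by rw [hC2_def, ← Finset.mul_sum]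
  have I2 : (e2 * s - e1 * e1) * s = C2 + e1 ^ 2 := by
    rw [hC2_def, expand2 w v s e1 α, h0, ← he1_def, ← he2_def]; ring
  have I3 : (e3 * s ^ 2 - 3 * e1 * e2 * s + 2 * e1 ^ 3) * s = C3 - e1 ^ 3 := by
    rw [hC3_def, expand3 w v s e1 α, h0, ← he1_def, ← he2_def, ← he3_def]; ring
  have key : |e3 * s ^ 2 - 3 * e1 * e2 * s + 2 * e1 ^ 3| * s
      ≤ 2 * L * s * (e2 * s - e1 * e1) * s := by
    have habs : |e3 * s ^ 2 - 3 * e1 * e2 * s + 2 * e1 ^ 3| * s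
        = |(e3 * s ^ 2 - 3 * e1 * e2 * s + 2 * e1 ^ 3) * s| := by
      rw [abs_mul, abs_of_pos hs]
    rw [habs, I3]
    calc |C3 - e1 ^ 3| ≤ |C3| + |e1 ^ 3| := abs_sub _ _
      _ ≤ 2 * (L * s) * C2 + (L * s) * e1 ^ 2 := by
          refine add_le_add hC3b ?_
          have h3 : |e1 ^ 3| = |e1| * e1 ^ 2 := by
            rw [abs_pow, pow_succ', sq_abs]
          rw [h3]
          exact mul_le_mul_of_nonneg_right he1b (sq_nonneg _)
      _ ≤ 2 * (L * s) * (C2 + e1 ^ 2) := by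
          nlinarith [mul_nonneg (mul_nonneg hLpos hs.le) (sq_nonneg e1)]
      _ = 2 * L * s * (e2 * s - e1 * e1) * s := by rw [← I2]; ring
  have hQ : 0 ≤ e2 * s - e1 * e1 := by nlinarith [I2, sq_nonneg e1]
  have hG : 0 ≤ (e2 * s - e1 * e1) / s ^ 2 := div_nonneg hQ (by positivity)
  constructor
  · -- |g'''| ≤ 2 L g''
    have hfrac : ((e3 * s + e2 * e1 - (e2 * e1 + e1 * e2)) * s ^ 2
          - (e2 * s - e1 * e1) * (2 * s ^ 1 * e1)) / (s ^ 2) ^ 2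
        = (e3 * s ^ 2 - 3 * e1 * e2 * s + 2 * e1 ^ 3) / s ^ 3 := by
      field_simp
      ring
    rw [hfrac, abs_div, abs_of_pos (by positivity : (0:ℝ) < s ^ 3),
      div_le_iff₀ (by positivity : (0:ℝ) < s ^ 3)]
    have hr : 2 * L * ((e2 * s - e1 * e1) / s ^ 2) * s ^ 3
        = 2 * L * s * (e2 * s - e1 * e1) := by
      field_simp
    rw [hr]
    nlinarith [key, hs]
  · -- 2 L g'' ≤ 2 √T ‖v‖₂ g''
    have hL2 : L ≤ Real.sqrt T * Real.sqrt (∑ t, (v t) ^ 2) := by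
      have h := Finset.sum_mul_sq_le_sq_mul_sq Finset.univ
        (fun _ : Fin T => (1 : ℝ)) (fun t => |v t|)
      simp only [one_mul, one_pow, sq_abs, Finset.sum_const, Finset.card_univ,
        Fintype.card_fin, nsmul_eq_mul] at h
      rw [← Real.sqrt_mul (by positivity : (0:ℝ) ≤ (T : ℝ))]
      exact (Real.le_sqrt hLpos (by positivity)).mpr (by simpa [hL_def] using h)
    nlinarith [mul_le_mul_of_nonneg_right hL2 hG]
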